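/- Let A, ε be independent random vectors (A ∈ ℝ^q, E[ε] = 0, finite second moments, E[AA^T] ≻ 0), and let R_v = ξ^T v + w^T ε denote the residual under an intervention replacing A by a random vector v with Cov(v, ε) = 0. Fix κ ∈ [0,1) and let C(κ) = {v : Cov(v,ε) = 0, E[vv^T] ⪯ (1/(1-κ))·E[AA^T]}. Then sup_{v ∈ C(κ)} E[(ξ^T v)²] = (1/(1-κ))·E[(ξ^T A)²], and consequently sup_{v ∈ C(κ)} E[R_v²] = E[(w^T ε)²] + (1/(1-κ))·E[(ξ^T A)²]. -/

import Mathlib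

open Matrix MeasureTheory ProbabilityTheory

section Aux
variable {Ω : Type*} [MeasurableSpace Ω] {μ : Measure Ω}

lemma l2_integrable_mul {f g : Ω → ℝ} (hf : MemLp f 2 μ) (hg : MemLp g 2 μ) :
    Integrable (fun ω => f ω * g ω) μ := by
  have h : MemLp (g • f) 1 μ :=
    hf.smul hg (hpqr := ENNReal.holderConjugate_iff.mpr ENNReal.inv_two_add_inv_two)
  rw [memLp_one_iff_integrable] at h
  simpa [Pi.smul_apply, smul_eq_mul, mul_comm, Pi.mul_def] using h

lemma dot_sq_integral {q : ℕ} (v : Ω → Fin q → ℝ)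
    (hv : ∀ i, MemLp (fun ω => v ω i) 2 μ) (ξ : Fin q → ℝ) :
    ∫ ω, (ξ ⬝ᵥ v ω) ^ 2 ∂μ = ∑ i, ∑ j, ξ i * ξ j * ∫ ω, v ω i * v ω j ∂μ := by
  have hint : ∀ i j : Fin q, Integrable (fun ω => ξ i * ξ j * (v ω i * v ω j)) μ :=
    fun i j => (l2_integrable_mul (hv i) (hv j)).const_mul _
  have heq : ∀ ω, (ξ ⬝ᵥ v ω) ^ 2 = ∑ i, ∑ j, ξ i * ξ j * (v ω i * v ω j) := by
    intro ω
    rw [dotProduct, sq, Finset.sum_mul_sum]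
    exact Finset.sum_congr rfl fun i _ => Finset.sum_congr rfl fun j _ => by ring
  simp_rw [heq]
  rw [integral_finset_sum _ fun i _ => integrable_finset_sum _ fun j _ => hint i j]
  refine Finset.sum_congr rfl fun i _ => ?_
  rw [integral_finset_sum _ fun j _ => hint i j]
  exact Finset.sum_congr rfl fun j _ => integral_const_mul _ _

lemma quad_eq {q : ℕ} (M : Matrix (Fin q) (Fin q) ℝ) (ξ : Fin q → ℝ) :
    ∑ i, ∑ j, ξ i * ξ j * M i j = ξ ⬝ᵥ (M *ᵥ ξ) := by
  simp only [dotProduct, mulVec, Finset.mul_sum]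
  exact Finset.sum_congr rfl fun i _ => Finset.sum_congr rfl fun j _ => by ring

lemma psd_bound {q : ℕ} {M N : Matrix (Fin q) (Fin q) ℝ} (h : (N - M).PosSemidef)
    (ξ : Fin q → ℝ) : ξ ⬝ᵥ (M *ᵥ ξ) ≤ ξ ⬝ᵥ (N *ᵥ ξ) := by
  have h2 := h.dotProduct_mulVec_nonneg ξ
  rw [star_trivial, sub_mulVec, dotProduct_sub] at h2
  linarith

lemma cross_integral_zero {q m : ℕ} (v : Ω → Fin q → ℝ) (ε : Ω → Fin m → ℝ)
    (hv : ∀ i, MemLp (fun ω => v ω i) 2 μ) (hε : ∀ j, MemLp (fun ω => ε ω j) 2 μ)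
    (hcov : ∀ i j, ∫ ω, v ω i * ε ω j ∂μ = 0) (ξ : Fin q → ℝ) (w : Fin m → ℝ) :
    ∫ ω, (ξ ⬝ᵥ v ω) * (w ⬝ᵥ ε ω) ∂μ = 0 := by
  have hint : ∀ (i : Fin q) (j : Fin m),
      Integrable (fun ω => ξ i * w j * (v ω i * ε ω j)) μ :=
    fun i j => (l2_integrable_mul (hv i) (hε j)).const_mul _
  have heq : ∀ ω, (ξ ⬝ᵥ v ω) * (w ⬝ᵥ ε ω) = ∑ i, ∑ j, ξ i * w j * (v ω i * ε ω j) := by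
    intro ω
    rw [dotProduct, dotProduct, Finset.sum_mul_sum]
    exact Finset.sum_congr rfl fun i _ => Finset.sum_congr rfl fun j _ => by ring
  simp_rw [heq]
  rw [integral_finset_sum _ fun i _ => integrable_finset_sum _ fun j _ => hint i j]
  refine Finset.sum_eq_zero fun i _ => ?_
  rw [integral_finset_sum _ fun j _ => hint i j]
  refine Finset.sum_eq_zero fun j _ => ?_
  rw [integral_const_mul, hcov i j, mul_zero]

lemma memL2_dot {q : ℕ} (v : Ω → Fin q → ℝ)
    (hv : ∀ i, MemLp (fun ω => v ω i) 2 μ) (ξ : Fin q → ℝ) :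
    MemLp (fun ω => ξ ⬝ᵥ v ω) 2 μ := by
  simp only [dotProduct]
  have := memLp_finsetSum' (μ := μ) (p := 2) Finset.univ
    (f := fun i ω => ξ i * v ω i) fun i _ => (hv i).const_mul (ξ i)
  convert this using 1
  ext ω
  simp [Finset.sum_apply]

lemma expand_sq {q m : ℕ} (v : Ω → Fin q → ℝ) (ε : Ω → Fin m → ℝ)
    (hv : ∀ i, MemLp (fun ω => v ω i) 2 μ) (hε : ∀ j, MemLp (fun ω => ε ω j) 2 μ)
    (hcov : ∀ i j, ∫ ω, v ω i * ε ω j ∂μ = 0) (ξ : Fin q → ℝ) (w : Fin m → ℝ) :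
    ∫ ω, (ξ ⬝ᵥ v ω + w ⬝ᵥ ε ω) ^ 2 ∂μ =
      (∫ ω, (ξ ⬝ᵥ v ω) ^ 2 ∂μ) + ∫ ω, (w ⬝ᵥ ε ω) ^ 2 ∂μ := by
  have hvd := memL2_dot v hv ξ
  have hεd := memL2_dot ε hε w
  have h1 : Integrable (fun ω => (ξ ⬝ᵥ v ω) ^ 2) μ := hvd.integrable_sq
  have h2 : Integrable (fun ω => (w ⬝ᵥ ε ω) ^ 2) μ := hεd.integrable_sq
  have h3 : Integrable (fun ω => 2 * ((ξ ⬝ᵥ v ω) * (w ⬝ᵥ ε ω))) μ :=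
    (l2_integrable_mul hvd hεd).const_mul 2
  have heq : ∀ ω, (ξ ⬝ᵥ v ω + w ⬝ᵥ ε ω) ^ 2 =
      (ξ ⬝ᵥ v ω) ^ 2 + 2 * ((ξ ⬝ᵥ v ω) * (w ⬝ᵥ ε ω)) + (w ⬝ᵥ ε ω) ^ 2 :=
    fun ω => by ring
  simp_rw [heq]
  have h13 : Integrable (fun ω => (ξ ⬝ᵥ v ω) ^ 2 + 2 * ((ξ ⬝ᵥ v ω) * (w ⬝ᵥ ε ω))) μ :=
    h1.add h3
  rw [integral_add h13 h2, integral_add h1 h3, integral_const_mul,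
    cross_integral_zero v ε hv hε hcov ξ w]
  ring

end Aux

/-- Worst-case intervention strength: over the class `C(κ)` of intervention
vectors `v` uncorrelated with `ε` and with `E[vvᵀ] ⪯ (1/(1-κ))E[AAᵀ]`, the
supremum of `E[(ξᵀv)²]` equals `(1/(1-κ))E[(ξᵀA)²]`, and consequently the
supremum of `E[(ξᵀv + wᵀε)²]` equals `E[(wᵀε)²] + (1/(1-κ))E[(ξᵀA)²]`. -/
theorem worst_case_intervention_sup {Ω : Type*} [MeasurableSpace Ω]
    (μ : Measure Ω) [IsProbabilityMeasure μ] {q m : ℕ}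
    (A : Ω → (Fin q → ℝ)) (ε : Ω → (Fin m → ℝ))
    (hAmeas : Measurable A) (hεmeas : Measurable ε)
    (hA2 : ∀ i, MemLp (fun ω => A ω i) 2 μ)
    (hε2 : ∀ j, MemLp (fun ω => ε ω j) 2 μ)
    (hindep : IndepFun A ε μ)
    (hεmean : ∀ j, ∫ ω, ε ω j ∂μ = 0)
    (hM : (Matrix.of fun i j => ∫ ω, A ω i * A ω j ∂μ :
        Matrix (Fin q) (Fin q) ℝ).PosDef)
    (ξ : Fin q → ℝ) (w : Fin m → ℝ)
    (κ : ℝ) (hκ0 : 0 ≤ κ) (hκ1 : κ < 1) :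
    (sSup {x : ℝ | ∃ v : Ω → (Fin q → ℝ), Measurable v ∧
          (∀ i, MemLp (fun ω => v ω i) 2 μ) ∧
          (∀ i j, ∫ ω, v ω i * ε ω j ∂μ = 0) ∧
          ((1 / (1 - κ)) • (Matrix.of fun i j => ∫ ω, A ω i * A ω j ∂μ) -
              (Matrix.of fun i j => ∫ ω, v ω i * v ω j ∂μ) :
            Matrix (Fin q) (Fin q) ℝ).PosSemidef ∧
          x = ∫ ω, (ξ ⬝ᵥ v ω) ^ 2 ∂μ} =
        (1 / (1 - κ)) * ∫ ω, (ξ ⬝ᵥ A ω) ^ 2 ∂μ) ∧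
      sSup {x : ℝ | ∃ v : Ω → (Fin q → ℝ), Measurable v ∧
          (∀ i, MemLp (fun ω => v ω i) 2 μ) ∧
          (∀ i j, ∫ ω, v ω i * ε ω j ∂μ = 0) ∧
          ((1 / (1 - κ)) • (Matrix.of fun i j => ∫ ω, A ω i * A ω j ∂μ) -
              (Matrix.of fun i j => ∫ ω, v ω i * v ω j ∂μ) :
            Matrix (Fin q) (Fin q) ℝ).PosSemidef ∧
          x = ∫ ω, (ξ ⬝ᵥ v ω + w ⬝ᵥ ε ω) ^ 2 ∂μ} =
        (∫ ω, (w ⬝ᵥ ε ω) ^ 2 ∂μ) + (1 / (1 - κ)) * ∫ ω, (ξ ⬝ᵥ A ω) ^ 2 ∂μ := by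
  have hκ : (0:ℝ) < 1 - κ := by linarith
  set c : ℝ := 1 / (1 - κ) with hcdef
  have hc : 0 < c := by positivity
  set MA : Matrix (Fin q) (Fin q) ℝ := Matrix.of fun i j => ∫ ω, A ω i * A ω j ∂μ
    with hMA
  -- the upper bound for the first quantity
  have key : ∀ v : Ω → (Fin q → ℝ), (∀ i, MemLp (fun ω => v ω i) 2 μ) →
      ((c • MA - (Matrix.of fun i j => ∫ ω, v ω i * v ω j ∂μ) :
        Matrix (Fin q) (Fin q) ℝ).PosSemidef) →
      ∫ ω, (ξ ⬝ᵥ v ω) ^ 2 ∂μ ≤ c * ∫ ω, (ξ ⬝ᵥ A ω) ^ 2 ∂μ := by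
    intro v hv2 hpsd
    have h1 : ∫ ω, (ξ ⬝ᵥ v ω) ^ 2 ∂μ =
        ξ ⬝ᵥ ((Matrix.of fun i j => ∫ ω, v ω i * v ω j ∂μ) *ᵥ ξ) := by
      rw [dot_sq_integral v hv2 ξ, ← quad_eq]; rfl
    have h2 : ∫ ω, (ξ ⬝ᵥ A ω) ^ 2 ∂μ = ξ ⬝ᵥ (MA *ᵥ ξ) := by
      rw [dot_sq_integral A hA2 ξ, ← quad_eq, hMA]; rfl
    rw [h1, h2]
    calc ξ ⬝ᵥ ((Matrix.of fun i j => ∫ ω, v ω i * v ω j ∂μ) *ᵥ ξ)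
        ≤ ξ ⬝ᵥ ((c • MA) *ᵥ ξ) := psd_bound hpsd ξ
      _ = c * (ξ ⬝ᵥ (MA *ᵥ ξ)) := by
          rw [smul_mulVec, dotProduct_smul, smul_eq_mul]
  -- the cross covariances of A with ε vanish
  have hAε : ∀ i j, ∫ ω, A ω i * ε ω j ∂μ = 0 := by
    intro i j
    have hij : IndepFun (fun ω => A ω i) (fun ω => ε ω j) μ :=
      hindep.comp (measurable_pi_apply i) (measurable_pi_apply j)
    have h := hij.integral_mul_eq_mul_integral ((measurable_pi_apply i).comp hAmeas).aestronglyMeasurable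
        ((measurable_pi_apply j).comp hεmeas).aestronglyMeasurable
    rw [hεmean j, mul_zero] at h
    simpa [Pi.mul_apply] using h
  -- the witness
  set s : ℝ := Real.sqrt c with hs
  have hss : s * s = c := Real.mul_self_sqrt hc.le
  set v₀ : Ω → (Fin q → ℝ) := fun ω => s • A ω with hv₀
  have hv₀meas : Measurable v₀ := hAmeas.const_smul s
  have hv₀2 : ∀ i, MemLp (fun ω => v₀ ω i) 2 μ := by
    intro i
    simpa [hv₀, Pi.smul_apply, smul_eq_mul] using (hA2 i).const_mul s
  have hv₀cov : ∀ i j, ∫ ω, v₀ ω i * ε ω j ∂μ = 0 := by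
    intro i j
    simp only [hv₀, Pi.smul_apply, smul_eq_mul, mul_assoc]
    rw [integral_const_mul, hAε i j, mul_zero]
  have hv₀M : (Matrix.of fun i j => ∫ ω, v₀ ω i * v₀ ω j ∂μ :
      Matrix (Fin q) (Fin q) ℝ) = c • MA := by
    ext i j
    simp only [Matrix.of_apply, hv₀, Pi.smul_apply, smul_eq_mul, Matrix.smul_apply,
      hMA]
    have : ∀ ω, s * A ω i * (s * A ω j) = c * (A ω i * A ω j) := by
      intro ω; rw [← hss]; ring
    simp_rw [this]
    rw [integral_const_mul]
  have hv₀psd : ((c • MA - (Matrix.of fun i j => ∫ ω, v₀ ω i * v₀ ω j ∂μ) :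
      Matrix (Fin q) (Fin q) ℝ)).PosSemidef := by
    rw [hv₀M, sub_self]
    exact Matrix.PosSemidef.zero
  have hv₀val : ∫ ω, (ξ ⬝ᵥ v₀ ω) ^ 2 ∂μ = c * ∫ ω, (ξ ⬝ᵥ A ω) ^ 2 ∂μ := by
    have : ∀ ω, (ξ ⬝ᵥ v₀ ω) ^ 2 = c * (ξ ⬝ᵥ A ω) ^ 2 := by
      intro ω
      rw [hv₀, dotProduct_smul, smul_eq_mul, mul_pow, ← hss]
      ring
    simp_rw [this]
    rw [integral_const_mul]
  constructor
  · apply IsGreatest.csSup_eq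
    constructor
    · exact ⟨v₀, hv₀meas, hv₀2, hv₀cov, hv₀psd, hv₀val.symm⟩
    · rintro x ⟨v, _, hv2, _, hpsd, rfl⟩
      exact key v hv2 hpsd
  · apply IsGreatest.csSup_eq
    constructor
    · refine ⟨v₀, hv₀meas, hv₀2, hv₀cov, hv₀psd, ?_⟩
      rw [expand_sq v₀ ε hv₀2 hε2 hv₀cov ξ w, hv₀val, add_comm]
    · rintro x ⟨v, _, hv2, hcov, hpsd, rfl⟩
      rw [expand_sq v ε hv2 hε2 hcov ξ w, add_comm]
      exact add_le_add_right (key v hv2 hpsd) _
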